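/- Let Ψ ∈ L²_+(ℝ^{Nd}) be a normalized symmetric wave function and f : {0,…,N} → [0,∞). Then ⟨Ψ, f̂ q_1 Ψ⟩ = ⟨Ψ, f̂ m̂ Ψ⟩ and ⟨Ψ, f̂ q_1 q_2 Ψ⟩ ≤ (N/(N−1)) ⟨Ψ, f̂ m̂² Ψ⟩, where m(k) = k/N. -/

import Mathlib

open Finset Matrix

/-- The lift of a one-particle operator `A` (a `d × d` matrix) to the `i`-th factor of the
`N`-fold tensor power `(ℂ^d)^{⊗N}`, whose kernel indices are `Fin N → Fin d`. -/
def liftOp {d : ℕ} {N : ℕ} (A : Matrix (Fin d) (Fin d) ℂ) (i : Fin N) :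
    Matrix (Fin N → Fin d) (Fin N → Fin d) ℂ :=
  Matrix.of fun x y => if ∀ j : Fin N, j ≠ i → x j = y j then A (x i) (y i) else 0

/-- The occupation-number projection `P_k`. -/
noncomputable def projP (d N : ℕ) (p : Matrix (Fin d) (Fin d) ℂ) (k : ℕ) :
    Matrix (Fin N → Fin d) (Fin N → Fin d) ℂ :=
  ∑ S ∈ Finset.powersetCard k (Finset.univ : Finset (Fin N)),
    (((List.finRange N).map fun i => liftOp (if i ∈ S then 1 - p else p) i).prod)

namespace Stmt9
variable {d N : ℕ}

noncomputable def tens (ε : Fin N → Matrix (Fin d) (Fin d) ℂ) :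
    Matrix (Fin N → Fin d) (Fin N → Fin d) ℂ :=
  Matrix.of fun x y => ∏ i, ε i (x i) (y i)

lemma tens_apply (ε : Fin N → Matrix (Fin d) (Fin d) ℂ) (x y) :
    tens ε x y = ∏ i, ε i (x i) (y i) := rfl

lemma tens_mul (ε ε' : Fin N → Matrix (Fin d) (Fin d) ℂ) :
    tens ε * tens ε' = tens (fun i => ε i * ε' i) := by
  ext x y
  simp only [Matrix.mul_apply, tens_apply]
  rw [Finset.prod_univ_sum, Fintype.piFinset_univ]
  exact Finset.sum_congr rfl fun z _ => (Finset.prod_mul_distrib).symm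

lemma tens_one : (tens (fun _ => (1:Matrix (Fin d) (Fin d) ℂ)) :
    Matrix (Fin N → Fin d) (Fin N → Fin d) ℂ) = 1 := by
  ext x y
  simp only [tens_apply, Matrix.one_apply]
  rw [Finset.prod_boole]
  simp [funext_iff]

lemma tens_zero {ε : Fin N → Matrix (Fin d) (Fin d) ℂ} (i : Fin N) (h : ε i = 0) :
    tens ε = 0 := by
  ext x y
  simp only [tens_apply, Matrix.zero_apply]
  exact Finset.prod_eq_zero (Finset.mem_univ i) (by simp [h])

lemma liftOp_eq_tens (A : Matrix (Fin d) (Fin d) ℂ) (i : Fin N) :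
    liftOp A i = tens (Function.update (fun _ => 1) i A) := by
  ext x y
  simp only [liftOp, Matrix.of_apply, tens_apply]
  rw [← Finset.mul_prod_erase _ _ (Finset.mem_univ i), Function.update_self]
  have : ∀ j ∈ Finset.univ.erase i,
      Function.update (fun _ => (1:Matrix (Fin d) (Fin d) ℂ)) i A j (x j) (y j)
        = if x j = y j then 1 else 0 := by
    intro j hj
    rw [Function.update_of_ne (Finset.mem_erase.1 hj).1, Matrix.one_apply]
  rw [Finset.prod_congr rfl this, Finset.prod_boole]
  by_cases h : ∀ j : Fin N, j ≠ i → x j = y j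
  · rw [if_pos h, if_pos, mul_one]
    intro j hj; exact h j (Finset.mem_erase.1 hj).1
  · rw [if_neg h, if_neg, mul_zero]
    intro hc; exact h fun j hj => hc j (Finset.mem_erase.2 ⟨hj, Finset.mem_univ j⟩)

lemma tens_conjTranspose (ε : Fin N → Matrix (Fin d) (Fin d) ℂ) :
    (tens ε)ᴴ = tens (fun i => (ε i)ᴴ) := by
  ext x y
  simp only [Matrix.conjTranspose_apply, tens_apply]
  rw [star_prod]

lemma prod_liftOp (ε : Fin N → Matrix (Fin d) (Fin d) ℂ) (l : List (Fin N)) (hl : l.Nodup) :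
    ((l.map fun i => liftOp (ε i) i).prod)
      = tens (fun i => if i ∈ l then ε i else 1) := by
  induction l with
  | nil => simp only [List.map_nil, List.prod_nil, List.not_mem_nil, if_false]; exact tens_one.symm
  | cons a l ih =>
    rw [List.map_cons, List.prod_cons, ih (List.nodup_cons.1 hl).2, liftOp_eq_tens, tens_mul]
    refine congrArg tens (funext fun i => ?_)
    by_cases h : i = a
    · subst h
      simp [Function.update_self, (List.nodup_cons.1 hl).1]
    · simp [Function.update_of_ne h, h, List.mem_cons]

/-- the occupation pattern of a set -/
def eS (p : Matrix (Fin d) (Fin d) ℂ) (S : Finset (Fin N)) : Fin N → Matrix (Fin d) (Fin d) ℂ :=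
  fun i => if i ∈ S then 1 - p else p

lemma projP_eq (p : Matrix (Fin d) (Fin d) ℂ) (k : ℕ) :
    projP d N p k
    = ∑ S ∈ Finset.powersetCard k (Finset.univ : Finset (Fin N)), tens (eS p S) := by
  refine Finset.sum_congr rfl fun S _ => ?_
  rw [prod_liftOp _ _ (List.nodup_finRange N)]
  unfold eS
  simp [List.mem_finRange]

section alg
variable {p : Matrix (Fin d) (Fin d) ℂ} (hidem : p * p = p)

include hidem

lemma q_mul_q : (1 - p) * (1 - p) = 1 - p := by
  rw [sub_mul, one_mul, mul_sub, mul_one, hidem]; simp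

lemma p_mul_q : p * (1 - p) = 0 := by rw [mul_sub, mul_one, hidem]; exact sub_self p

lemma q_mul_p : (1 - p) * p = 0 := by rw [sub_mul, one_mul, hidem]; exact sub_self p

lemma eS_mul_eS (S : Finset (Fin N)) (i : Fin N) : eS p S i * eS p S i = eS p S i := by
  unfold eS; split
  · exact q_mul_q hidem
  · exact hidem

lemma tens_eS_mul_eS (S T : Finset (Fin N)) :
    tens (eS p S) * tens (eS p T) = if S = T then tens (eS p S) else 0 := by
  rw [tens_mul]
  split
  · subst ‹S = T›
    exact congrArg tens (funext fun i => eS_mul_eS hidem S i)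
  · rename_i hST
    have : ∃ i, ¬ (i ∈ S ↔ i ∈ T) := by
      by_contra hc
      push_neg at hc
      exact hST (Finset.ext fun i => (hc i))
    obtain ⟨i, hi⟩ := this
    refine tens_zero i ?_
    unfold eS
    by_cases h1 : i ∈ S <;> by_cases h2 : i ∈ T <;>
      simp [h1, h2, p_mul_q hidem, q_mul_p hidem] at hi ⊢

lemma tens_eS_mul_q (S : Finset (Fin N)) (i : Fin N) :
    tens (eS p S) * liftOp (1 - p) i = if i ∈ S then tens (eS p S) else 0 := by
  rw [liftOp_eq_tens, tens_mul]
  split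
  · refine congrArg tens (funext fun j => ?_)
    by_cases h : j = i
    · subst h
      rw [Function.update_self]
      unfold eS
      rw [if_pos ‹j ∈ S›]
      exact q_mul_q hidem
    · rw [Function.update_of_ne h, mul_one]
  · refine tens_zero i ?_
    rw [Function.update_self]
    unfold eS
    rw [if_neg ‹¬ i ∈ S›]
    exact p_mul_q hidem

lemma Pk_mul_Pl (k l : ℕ) :
    (∑ S ∈ Finset.powersetCard k (Finset.univ : Finset (Fin N)), tens (eS p S)) *
    (∑ T ∈ Finset.powersetCard l (Finset.univ : Finset (Fin N)), tens (eS p T))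
    = if k = l then ∑ S ∈ Finset.powersetCard k (Finset.univ : Finset (Fin N)), tens (eS p S)
      else 0 := by
  rw [Finset.sum_mul_sum]
  have key : ∀ S ∈ Finset.powersetCard k (Finset.univ : Finset (Fin N)),
      ∑ T ∈ Finset.powersetCard l (Finset.univ : Finset (Fin N)),
        tens (eS p S) * tens (eS p T)
      = if k = l then tens (eS p S) else 0 := by
    intro S hS
    have hcard : S.card = k := (Finset.mem_powersetCard.1 hS).2
    split
    · subst ‹k = l›
      calc ∑ T ∈ Finset.powersetCard k (Finset.univ : Finset (Fin N)),
            tens (eS p S) * tens (eS p T)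
          = ∑ T ∈ Finset.powersetCard k (Finset.univ : Finset (Fin N)),
            if S = T then tens (eS p S) else 0 :=
            Finset.sum_congr rfl fun T _ => tens_eS_mul_eS hidem S T
        _ = _ := by rw [Finset.sum_ite_eq, if_pos hS]
    · refine Finset.sum_eq_zero fun T hT => ?_
      rw [tens_eS_mul_eS hidem S T, if_neg]
      intro h; subst h
      exact ‹¬ k = l› (hcard ▸ (Finset.mem_powersetCard.1 hT).2.symm ▸ rfl)
  rw [Finset.sum_congr rfl key]
  split <;> simp

/-- diagonal multiplication of weighted sums of the `P_k` -/
lemma diag_mul (m : ℕ) (a b : ℕ → ℂ) :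
    (∑ k ∈ Finset.range m, a k •
        (∑ S ∈ Finset.powersetCard k (Finset.univ : Finset (Fin N)), tens (eS p S))) *
    (∑ l ∈ Finset.range m, b l •
        (∑ T ∈ Finset.powersetCard l (Finset.univ : Finset (Fin N)), tens (eS p T)))
    = ∑ k ∈ Finset.range m, (a k * b k) •
        (∑ S ∈ Finset.powersetCard k (Finset.univ : Finset (Fin N)), tens (eS p S)) := by
  rw [Finset.sum_mul_sum]
  refine Finset.sum_congr rfl fun k hk => ?_
  calc ∑ l ∈ Finset.range m,
        (a k • (∑ S ∈ Finset.powersetCard k (Finset.univ : Finset (Fin N)), tens (eS p S))) *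
        (b l • (∑ T ∈ Finset.powersetCard l (Finset.univ : Finset (Fin N)), tens (eS p T)))
      = ∑ l ∈ Finset.range m, (if k = l then (a k * b l) •
          (∑ S ∈ Finset.powersetCard k (Finset.univ : Finset (Fin N)), tens (eS p S))
          else 0) := by
        refine Finset.sum_congr rfl fun l _ => ?_
        rw [smul_mul_assoc, mul_smul_comm, smul_smul, Pk_mul_Pl hidem k l]
        split
        · rfl
        · rw [smul_zero]
    _ = _ := by rw [Finset.sum_ite_eq, if_pos hk]

end alg

def permEquiv (σ : Equiv.Perm (Fin N)) : (Fin N → Fin d) ≃ (Fin N → Fin d) where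
  toFun x := x ∘ σ
  invFun x := x ∘ σ.symm
  left_inv x := funext fun i => by simp
  right_inv x := funext fun i => by simp

section E
variable (Ψ : (Fin N → Fin d) → ℂ)

lemma E_eq (M : Matrix (Fin N → Fin d) (Fin N → Fin d) ℂ) :
    dotProduct (star Ψ) (M *ᵥ Ψ)
      = ∑ x, ∑ y, (starRingEnd ℂ) (Ψ x) * (M x y * Ψ y) := by
  simp [dotProduct, Matrix.mulVec, Finset.mul_sum]

lemma sum_mulVec {ι : Type*} (s : Finset ι)
    (A : ι → Matrix (Fin N → Fin d) (Fin N → Fin d) ℂ) (v : (Fin N → Fin d) → ℂ) :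
    (∑ x ∈ s, A x) *ᵥ v = ∑ x ∈ s, A x *ᵥ v := by
  ext i
  simp only [Matrix.mulVec, dotProduct, Matrix.sum_apply, Finset.sum_apply,
    Finset.sum_mul]
  exact Finset.sum_comm

lemma dot_sum {ι : Type*} (s : Finset ι) (u : (Fin N → Fin d) → ℂ)
    (w : ι → (Fin N → Fin d) → ℂ) :
    dotProduct u (∑ x ∈ s, w x) = ∑ x ∈ s, dotProduct u (w x) := by
  simp only [dotProduct, Finset.sum_apply, Finset.mul_sum]
  exact Finset.sum_comm

lemma E_sum_smul {ι : Type*} (s : Finset ι) (c : ι → ℂ)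
    (A : ι → Matrix (Fin N → Fin d) (Fin N → Fin d) ℂ) :
    dotProduct (star Ψ) ((∑ x ∈ s, c x • A x) *ᵥ Ψ)
      = ∑ x ∈ s, c x * dotProduct (star Ψ) (A x *ᵥ Ψ) := by
  rw [sum_mulVec, dot_sum]
  refine Finset.sum_congr rfl fun x _ => ?_
  rw [Matrix.smul_mulVec, dotProduct_smul, smul_eq_mul]

lemma E_sum {ι : Type*} (s : Finset ι)
    (A : ι → Matrix (Fin N → Fin d) (Fin N → Fin d) ℂ) :
    dotProduct (star Ψ) ((∑ x ∈ s, A x) *ᵥ Ψ)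
      = ∑ x ∈ s, dotProduct (star Ψ) (A x *ᵥ Ψ) := by
  rw [sum_mulVec, dot_sum]

variable (hsym : ∀ σ : Equiv.Perm (Fin N), ∀ x : Fin N → Fin d, Ψ (x ∘ σ) = Ψ x)
include hsym

lemma E_perm (σ : Equiv.Perm (Fin N)) (ε : Fin N → Matrix (Fin d) (Fin d) ℂ) :
    dotProduct (star Ψ) (tens ε *ᵥ Ψ)
      = dotProduct (star Ψ) (tens (fun i => ε (σ i)) *ᵥ Ψ) := by
  rw [E_eq, E_eq]
  refine Fintype.sum_equiv (permEquiv (d := d) σ) _ _ fun x => ?_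
  refine Fintype.sum_equiv (permEquiv (d := d) σ) _ _ fun y => ?_
  show (starRingEnd ℂ) (Ψ x) * (tens ε x y * Ψ y)
      = (starRingEnd ℂ) (Ψ (x ∘ σ)) * (tens (fun i => ε (σ i)) (x ∘ σ) (y ∘ σ) * Ψ (y ∘ σ))
  rw [hsym σ x, hsym σ y]
  congr 2
  rw [tens_apply, tens_apply]
  exact (Equiv.prod_comp σ (fun i => ε i (x i) (y i))).symm

lemma E_image (p : Matrix (Fin d) (Fin d) ℂ) (σ : Equiv.Perm (Fin N)) (S : Finset (Fin N)) :
    dotProduct (star Ψ) (tens (eS p (S.image σ)) *ᵥ Ψ)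
      = dotProduct (star Ψ) (tens (eS p S) *ᵥ Ψ) := by
  have h : eS p (S.image σ) = fun i => eS p S (σ.symm i) := by
    funext i
    unfold eS
    congr 1
    simp only [Finset.mem_image, eq_iff_iff]
    constructor
    · rintro ⟨a, ha, rfl⟩; simpa using ha
    · intro h; exact ⟨σ.symm i, h, by simp⟩
  rw [h]
  exact (E_perm Ψ hsym σ.symm (eS p S)).symm
end E

section main
variable (Ψ : (Fin N → Fin d) → ℂ) (p : Matrix (Fin d) (Fin d) ℂ)

/-- abbreviation for the quadratic form value -/
noncomputable def cc (S : Finset (Fin N)) : ℂ :=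
  dotProduct (star Ψ) (tens (eS p S) *ᵥ Ψ)

variable (hsym : ∀ σ : Equiv.Perm (Fin N), ∀ x : Fin N → Fin d, Ψ (x ∘ σ) = Ψ x)
include hsym

lemma sum_filter_image (σ : Equiv.Perm (Fin N)) (k : ℕ) (I : Finset (Fin N)) :
    ∑ S ∈ (Finset.powersetCard k Finset.univ).filter (fun S => I ⊆ S), cc Ψ p S
      = ∑ S ∈ (Finset.powersetCard k Finset.univ).filter (fun S => I.image σ ⊆ S), cc Ψ p S := by
  refine Finset.sum_nbij' (fun S => S.image σ) (fun T => T.image σ.symm) ?_ ?_ ?_ ?_ ?_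
  · intro S hS
    rw [Finset.mem_filter] at hS ⊢
    refine ⟨Finset.mem_powersetCard.2 ⟨Finset.subset_univ _, ?_⟩, Finset.image_subset_image hS.2⟩
    rw [Finset.card_image_of_injective _ σ.injective]
    exact (Finset.mem_powersetCard.1 hS.1).2
  · intro T hT
    rw [Finset.mem_filter] at hT ⊢
    refine ⟨Finset.mem_powersetCard.2 ⟨Finset.subset_univ _, ?_⟩, ?_⟩
    · rw [Finset.card_image_of_injective _ σ.symm.injective]
      exact (Finset.mem_powersetCard.1 hT.1).2
    · have := Finset.image_subset_image (f := ⇑σ.symm) hT.2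
      rwa [Finset.image_image, Equiv.symm_comp_self, Finset.image_id] at this
  · intro S _; simp [Finset.image_image]
  · intro T _; simp [Finset.image_image]
  · intro S _; unfold cc; exact (E_image Ψ hsym p σ S).symm

lemma key1 (k : ℕ) (i0 : Fin N) :
    (N : ℂ) * ∑ S ∈ (Finset.powersetCard k Finset.univ).filter (fun S => i0 ∈ S), cc Ψ p S
      = (k : ℂ) * ∑ S ∈ Finset.powersetCard k (Finset.univ : Finset (Fin N)), cc Ψ p S := by
  have h1 : ∀ i : Fin N,
      ∑ S ∈ (Finset.powersetCard k Finset.univ).filter (fun S => i0 ∈ S), cc Ψ p S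
        = ∑ S ∈ (Finset.powersetCard k Finset.univ).filter (fun S => i ∈ S), cc Ψ p S := by
    intro i
    have := sum_filter_image Ψ p hsym (Equiv.swap i0 i) k {i0}
    simpa [Finset.singleton_subset_iff, Finset.image_singleton] using this
  have h2 : ∑ i : Fin N,
      (∑ S ∈ (Finset.powersetCard k Finset.univ).filter (fun S => i ∈ S), cc Ψ p S)
      = (N : ℂ) * ∑ S ∈ (Finset.powersetCard k Finset.univ).filter (fun S => i0 ∈ S), cc Ψ p S := by
    calc ∑ i : Fin N, ∑ S ∈ (Finset.powersetCard k Finset.univ).filter (fun S => i ∈ S), cc Ψ p S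
        = ∑ _i : Fin N, ∑ S ∈ (Finset.powersetCard k Finset.univ).filter (fun S => i0 ∈ S), cc Ψ p S :=
          Finset.sum_congr rfl fun i _ => (h1 i).symm
      _ = _ := by rw [Finset.sum_const, Finset.card_univ, Fintype.card_fin, nsmul_eq_mul]
  rw [← h2]
  have h3 : ∀ i : Fin N,
      ∑ S ∈ (Finset.powersetCard k Finset.univ).filter (fun S => i ∈ S), cc Ψ p S
        = ∑ S ∈ Finset.powersetCard k (Finset.univ : Finset (Fin N)),
            (if i ∈ S then cc Ψ p S else 0) := fun i => Finset.sum_filter _ _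
  rw [Finset.sum_congr rfl fun i _ => h3 i, Finset.sum_comm, Finset.mul_sum]
  refine Finset.sum_congr rfl fun S hS => ?_
  have hcard : S.card = k := (Finset.mem_powersetCard.1 hS).2
  rw [Finset.sum_ite_mem, Finset.univ_inter, Finset.sum_const, hcard, nsmul_eq_mul]

lemma key2 (k : ℕ) (i0 i1 : Fin N) (h01 : i0 ≠ i1) :
    (N : ℂ) * ((N : ℂ) - 1) *
      ∑ S ∈ (Finset.powersetCard k Finset.univ).filter (fun S => i0 ∈ S ∧ i1 ∈ S), cc Ψ p S
      = (k : ℂ) * ((k : ℂ) - 1) *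
          ∑ S ∈ Finset.powersetCard k (Finset.univ : Finset (Fin N)), cc Ψ p S := by
  have hpair : ∀ i j : Fin N, i ≠ j →
      ∑ S ∈ (Finset.powersetCard k Finset.univ).filter (fun S => i0 ∈ S ∧ i1 ∈ S), cc Ψ p S
        = ∑ S ∈ (Finset.powersetCard k Finset.univ).filter (fun S => i ∈ S ∧ j ∈ S), cc Ψ p S := by
    intro i j hij
    set τ : Equiv.Perm (Fin N) := Equiv.swap i0 i with hτ
    have hτj : τ j ≠ i0 := by
      intro hc
      apply hij
      have : τ (τ j) = τ i0 := by rw [hc]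
      simpa [hτ, Equiv.swap_apply_left] using this.symm
    set ρ : Equiv.Perm (Fin N) := Equiv.swap i1 (τ j) with hρ
    set σ : Equiv.Perm (Fin N) := ρ.trans τ with hσ
    have hσ0 : σ i0 = i := by
      have hρ0 : ρ i0 = i0 := Equiv.swap_apply_of_ne_of_ne h01 (Ne.symm hτj)
      simp [hσ, Equiv.trans_apply, hρ0, hτ, Equiv.swap_apply_left]
    have hσ1 : σ i1 = j := by
      have hρ1 : ρ i1 = τ j := Equiv.swap_apply_left _ _
      simp [hσ, Equiv.trans_apply, hρ1, hτ, Equiv.swap_apply_self]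
    have := sum_filter_image Ψ p hsym σ k {i0, i1}
    have himg : ({i0, i1} : Finset (Fin N)).image σ = {i, j} := by
      rw [Finset.image_insert, Finset.image_singleton, hσ0, hσ1]
    rw [himg] at this
    have f1 : (Finset.powersetCard k (Finset.univ : Finset (Fin N))).filter
        (fun S => ({i0, i1} : Finset (Fin N)) ⊆ S)
        = (Finset.powersetCard k Finset.univ).filter (fun S => i0 ∈ S ∧ i1 ∈ S) :=
      Finset.filter_congr fun S _ => by
        rw [Finset.insert_subset_iff, Finset.singleton_subset_iff]
    have f2 : (Finset.powersetCard k (Finset.univ : Finset (Fin N))).filter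
        (fun S => ({i, j} : Finset (Fin N)) ⊆ S)
        = (Finset.powersetCard k Finset.univ).filter (fun S => i ∈ S ∧ j ∈ S) :=
      Finset.filter_congr fun S _ => by
        rw [Finset.insert_subset_iff, Finset.singleton_subset_iff]
    rw [f1, f2] at this
    exact this
  have h2 : ∑ x ∈ (Finset.univ : Finset (Fin N)).offDiag,
      (∑ S ∈ (Finset.powersetCard k Finset.univ).filter (fun S => x.1 ∈ S ∧ x.2 ∈ S), cc Ψ p S)
      = (N : ℂ) * ((N : ℂ) - 1) *
        ∑ S ∈ (Finset.powersetCard k Finset.univ).filter (fun S => i0 ∈ S ∧ i1 ∈ S), cc Ψ p S := by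
    calc ∑ x ∈ (Finset.univ : Finset (Fin N)).offDiag,
        (∑ S ∈ (Finset.powersetCard k Finset.univ).filter (fun S => x.1 ∈ S ∧ x.2 ∈ S), cc Ψ p S)
        = ∑ x ∈ (Finset.univ : Finset (Fin N)).offDiag,
          (∑ S ∈ (Finset.powersetCard k Finset.univ).filter (fun S => i0 ∈ S ∧ i1 ∈ S), cc Ψ p S) := by
          refine Finset.sum_congr rfl fun x hx => ?_
          exact (hpair x.1 x.2 (Finset.mem_offDiag.1 hx).2.2).symm
      _ = _ := by
          rw [Finset.sum_const, Finset.offDiag_card, Finset.card_univ, Fintype.card_fin,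
            nsmul_eq_mul]
          congr 1
          have hNN : N ≤ N * N := Nat.le_mul_of_pos_left N (by omega)
          push_cast [Nat.cast_sub hNN]
          ring
  rw [← h2]
  have h3 : ∀ x : Fin N × Fin N,
      ∑ S ∈ (Finset.powersetCard k Finset.univ).filter (fun S => x.1 ∈ S ∧ x.2 ∈ S), cc Ψ p S
        = ∑ S ∈ Finset.powersetCard k (Finset.univ : Finset (Fin N)),
            (if x.1 ∈ S ∧ x.2 ∈ S then cc Ψ p S else 0) := fun x => Finset.sum_filter _ _
  rw [Finset.sum_congr rfl fun x _ => h3 x, Finset.sum_comm, Finset.mul_sum]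
  refine Finset.sum_congr rfl fun S hS => ?_
  have hcard : S.card = k := (Finset.mem_powersetCard.1 hS).2
  have hfilt : (Finset.univ : Finset (Fin N)).offDiag.filter (fun x => x.1 ∈ S ∧ x.2 ∈ S)
      = S.offDiag := by
    ext x
    simp only [Finset.mem_offDiag, Finset.mem_filter, Finset.mem_univ, true_and]
    tauto
  rw [← Finset.sum_filter, hfilt, Finset.sum_const, Finset.offDiag_card, hcard, nsmul_eq_mul]
  congr 1
  have hkk : k ≤ k * k := by nlinarith
  push_cast [Nat.cast_sub hkk]
  ring

omit hsym in
lemma cc_re_nonneg (hp : p.IsHermitian) (hidem : p * p = p) (S : Finset (Fin N)) :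
    0 ≤ (cc Ψ p S).re := by
  set M := tens (eS p S) with hM
  have hH : Mᴴ = M := by
    rw [hM, tens_conjTranspose]
    refine congrArg tens (funext fun i => ?_)
    unfold eS
    split
    · rw [Matrix.conjTranspose_sub, Matrix.conjTranspose_one, hp.eq]
    · exact hp.eq
  have hMM : M * M = M := by
    rw [hM, tens_mul]
    exact congrArg tens (funext fun i => eS_mul_eS hidem S i)
  have step : cc Ψ p S = dotProduct (star (M *ᵥ Ψ)) (M *ᵥ Ψ) := by
    unfold cc
    rw [← hM]
    calc dotProduct (star Ψ) (M *ᵥ Ψ)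
        = dotProduct (star Ψ) ((Mᴴ * M) *ᵥ Ψ) := by rw [hH, hMM]
      _ = dotProduct (star Ψ) (Mᴴ *ᵥ (M *ᵥ Ψ)) := by rw [← Matrix.mulVec_mulVec]
      _ = dotProduct (Matrix.vecMul (star Ψ) Mᴴ) (M *ᵥ Ψ) :=
          Matrix.dotProduct_mulVec _ _ _
      _ = dotProduct (star (M *ᵥ Ψ)) (M *ᵥ Ψ) := by rw [Matrix.star_mulVec]
  rw [step]
  have : (dotProduct (star (M *ᵥ Ψ)) (M *ᵥ Ψ)).re
      = ∑ x, Complex.normSq ((M *ᵥ Ψ) x) := by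
    rw [dotProduct, Complex.re_sum]
    refine Finset.sum_congr rfl fun x _ => ?_
    simp [Complex.normSq_apply, Complex.mul_re]
  rw [this]
  exact Finset.sum_nonneg fun x _ => Complex.normSq_nonneg _

end main
end Stmt9

/-- For a normalized symmetric wave function `Ψ` and a nonnegative weight
`f : {0,…,N} → [0,∞)`, one has `⟨Ψ, f̂ q₁ Ψ⟩ = ⟨Ψ, f̂ m̂ Ψ⟩` and
`⟨Ψ, f̂ q₁ q₂ Ψ⟩ ≤ (N/(N−1)) ⟨Ψ, f̂ m̂² Ψ⟩`, where `m(k) = k/N`. -/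
theorem stmt_9 (d N : ℕ) (hN : 2 ≤ N) (p : Matrix (Fin d) (Fin d) ℂ)
    (hp : p.IsHermitian) (hidem : p * p = p)
    (Ψ : (Fin N → Fin d) → ℂ) (hnorm : ∑ x, Complex.normSq (Ψ x) = 1)
    (hsym : ∀ σ : Equiv.Perm (Fin N), ∀ x : Fin N → Fin d, Ψ (x ∘ σ) = Ψ x)
    (f : ℕ → ℝ) (hf : ∀ k, 0 ≤ f k) :
    let q : Matrix (Fin d) (Fin d) ℂ := 1 - p
    let q₁ : Matrix (Fin N → Fin d) (Fin N → Fin d) ℂ := liftOp q ⟨0, by omega⟩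
    let q₂ : Matrix (Fin N → Fin d) (Fin N → Fin d) ℂ := liftOp q ⟨1, by omega⟩
    let fhat : Matrix (Fin N → Fin d) (Fin N → Fin d) ℂ :=
      ∑ k ∈ Finset.range (N + 1), ((f k : ℝ) : ℂ) • projP d N p k
    let mhat : Matrix (Fin N → Fin d) (Fin N → Fin d) ℂ :=
      ∑ k ∈ Finset.range (N + 1), ((k : ℂ) / (N : ℂ)) • projP d N p k
    dotProduct (star Ψ) ((fhat * q₁) *ᵥ Ψ)
        = dotProduct (star Ψ) ((fhat * mhat) *ᵥ Ψ)
    ∧ (dotProduct (star Ψ) ((fhat * q₁ * q₂) *ᵥ Ψ)).re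
        ≤ (N : ℝ) / ((N : ℝ) - 1) *
            (dotProduct (star Ψ) ((fhat * mhat * mhat) *ᵥ Ψ)).re := by
  intro q q₁ q₂ fhat mhat
  have hi0 : (0:ℕ) < N := by omega
  set i0 : Fin N := ⟨0, by omega⟩ with hi0d
  set i1 : Fin N := ⟨1, by omega⟩ with hi1d
  have h01 : i0 ≠ i1 := by simp [hi0d, hi1d, Fin.ext_iff]
  have hNne : (N:ℂ) ≠ 0 := Nat.cast_ne_zero.2 (by omega)
  -- notation
  have hfhat : fhat = ∑ k ∈ Finset.range (N+1), ((f k : ℝ) : ℂ) •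
      (∑ S ∈ Finset.powersetCard k (Finset.univ : Finset (Fin N)), Stmt9.tens (Stmt9.eS p S)) :=
    Finset.sum_congr rfl fun k _ => by rw [Stmt9.projP_eq]
  have hmhat : mhat = ∑ k ∈ Finset.range (N+1), ((k:ℂ)/(N:ℂ)) •
      (∑ S ∈ Finset.powersetCard k (Finset.univ : Finset (Fin N)), Stmt9.tens (Stmt9.eS p S)) :=
    Finset.sum_congr rfl fun k _ => by rw [Stmt9.projP_eq]
  have hfm : fhat * mhat = ∑ k ∈ Finset.range (N+1), (((f k : ℝ):ℂ) * ((k:ℂ)/(N:ℂ))) •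
      (∑ S ∈ Finset.powersetCard k (Finset.univ : Finset (Fin N)), Stmt9.tens (Stmt9.eS p S)) := by
    rw [hfhat, hmhat]
    exact Stmt9.diag_mul hidem _ _ _
  have hfmm : fhat * mhat * mhat = ∑ k ∈ Finset.range (N+1),
      ((((f k : ℝ):ℂ) * ((k:ℂ)/(N:ℂ))) * ((k:ℂ)/(N:ℂ))) •
      (∑ S ∈ Finset.powersetCard k (Finset.univ : Finset (Fin N)), Stmt9.tens (Stmt9.eS p S)) := by
    rw [hfm, hmhat]
    exact Stmt9.diag_mul hidem _ _ _
  have hq1 : fhat * q₁ = ∑ k ∈ Finset.range (N+1), ((f k : ℝ):ℂ) •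
      (∑ S ∈ (Finset.powersetCard k (Finset.univ : Finset (Fin N))).filter
        (fun S => i0 ∈ S), Stmt9.tens (Stmt9.eS p S)) := by
    show fhat * liftOp (1 - p) i0 = _
    rw [hfhat, Finset.sum_mul]
    refine Finset.sum_congr rfl fun k _ => ?_
    rw [smul_mul_assoc, Finset.sum_mul]
    congr 1
    rw [Finset.sum_congr rfl (fun S _ => Stmt9.tens_eS_mul_q hidem S i0)]
    exact (Finset.sum_filter _ _).symm
  have hq12 : fhat * q₁ * q₂ = ∑ k ∈ Finset.range (N+1), ((f k : ℝ):ℂ) •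
      (∑ S ∈ (Finset.powersetCard k (Finset.univ : Finset (Fin N))).filter
        (fun S => i0 ∈ S ∧ i1 ∈ S), Stmt9.tens (Stmt9.eS p S)) := by
    show (fhat * q₁) * liftOp (1 - p) i1 = _
    rw [hq1, Finset.sum_mul]
    refine Finset.sum_congr rfl fun k _ => ?_
    rw [smul_mul_assoc, Finset.sum_mul]
    congr 1
    rw [Finset.sum_congr rfl (fun S _ => Stmt9.tens_eS_mul_q hidem S i1),
      ← Finset.sum_filter, Finset.filter_filter]
  constructor
  · -- first claim
    rw [hq1, hfm, Stmt9.E_sum_smul, Stmt9.E_sum_smul]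
    refine Finset.sum_congr rfl fun k _ => ?_
    rw [Stmt9.E_sum, Stmt9.E_sum]
    have hk1 := Stmt9.key1 Ψ p hsym k i0
    unfold Stmt9.cc at hk1
    have h : ∑ S ∈ (Finset.powersetCard k (Finset.univ : Finset (Fin N))).filter
          (fun S => i0 ∈ S), dotProduct (star Ψ) (Stmt9.tens (Stmt9.eS p S) *ᵥ Ψ)
        = (k:ℂ)/(N:ℂ) * ∑ S ∈ Finset.powersetCard k (Finset.univ : Finset (Fin N)),
            dotProduct (star Ψ) (Stmt9.tens (Stmt9.eS p S) *ᵥ Ψ) := by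
      field_simp
      linear_combination hk1
    rw [h]
    ring
  · -- second claim
    have hL : dotProduct (star Ψ) ((fhat * q₁ * q₂) *ᵥ Ψ)
        = ∑ k ∈ Finset.range (N+1), ((f k : ℝ):ℂ) *
          (∑ S ∈ (Finset.powersetCard k (Finset.univ : Finset (Fin N))).filter
            (fun S => i0 ∈ S ∧ i1 ∈ S), Stmt9.cc Ψ p S) := by
      rw [hq12, Stmt9.E_sum_smul]
      exact Finset.sum_congr rfl fun k _ => by rw [Stmt9.E_sum]; rfl
    have hR : dotProduct (star Ψ) ((fhat * mhat * mhat) *ᵥ Ψ)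
        = ∑ k ∈ Finset.range (N+1),
            ((((f k : ℝ):ℂ) * ((k:ℂ)/(N:ℂ))) * ((k:ℂ)/(N:ℂ))) *
            (∑ S ∈ Finset.powersetCard k (Finset.univ : Finset (Fin N)), Stmt9.cc Ψ p S) := by
      rw [hfmm, Stmt9.E_sum_smul]
      exact Finset.sum_congr rfl fun k _ => by rw [Stmt9.E_sum]; rfl
    rw [hL, hR, Complex.re_sum, Complex.re_sum, Finset.mul_sum]
    refine Finset.sum_le_sum fun k _ => ?_
    set D : ℂ := ∑ S ∈ (Finset.powersetCard k (Finset.univ : Finset (Fin N))).filter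
        (fun S => i0 ∈ S ∧ i1 ∈ S), Stmt9.cc Ψ p S with hD
    set T : ℂ := ∑ S ∈ Finset.powersetCard k (Finset.univ : Finset (Fin N)),
        Stmt9.cc Ψ p S with hT
    have hr : 0 ≤ T.re := by
      rw [hT, Complex.re_sum]
      exact Finset.sum_nonneg fun S _ => Stmt9.cc_re_nonneg Ψ p hp hidem S
    have hkey := Stmt9.key2 Ψ p hsym k i0 i1 h01
    rw [← hD, ← hT] at hkey
    have hre : (N:ℝ)*((N:ℝ)-1) * D.re = (k:ℝ)*((k:ℝ)-1) * T.re := by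
      have e : ((((N:ℝ)*((N:ℝ)-1)):ℝ):ℂ) * D = ((((k:ℝ)*((k:ℝ)-1)):ℝ):ℂ) * T := by
        push_cast
        linear_combination hkey
      have := congrArg Complex.re e
      rwa [Complex.re_ofReal_mul, Complex.re_ofReal_mul] at this
    have hcoef : (((f k : ℝ):ℂ) * ((k:ℂ)/(N:ℂ))) * ((k:ℂ)/(N:ℂ))
        = (((f k * ((k:ℝ)/(N:ℝ)) * ((k:ℝ)/(N:ℝ))) : ℝ):ℂ) := by
      push_cast
      ring
    rw [hcoef, Complex.re_ofReal_mul, Complex.re_ofReal_mul]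
    have hN2 : (2:ℝ) ≤ (N:ℝ) := by exact_mod_cast hN
    have hNN : (0:ℝ) < (N:ℝ)*((N:ℝ)-1) := by nlinarith
    have hN0 : (N:ℝ) ≠ 0 := by linarith
    have hN1 : (N:ℝ) - 1 ≠ 0 := by linarith
    have hrw : (N:ℝ)/((N:ℝ)-1) * (f k * ((k:ℝ)/(N:ℝ)) * ((k:ℝ)/(N:ℝ)) * T.re)
        = f k * ((k:ℝ)*(k:ℝ)) * T.re / ((N:ℝ)*((N:ℝ)-1)) := by
      field_simp
    rw [hrw, le_div_iff₀ hNN]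
    have h5 : f k * ((N:ℝ)*((N:ℝ)-1) * D.re) = f k * ((k:ℝ)*((k:ℝ)-1)*T.re) := by rw [hre]
    have h6 : 0 ≤ f k * (k:ℝ) * T.re :=
      mul_nonneg (mul_nonneg (hf k) (Nat.cast_nonneg k)) hr
    nlinarith [h5, h6]
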